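/- Let W be an n-dimensional complex vector space, N ≥ 1, and x_1, …, x_N ∈ End(W). Let pr : W ⊗ ℂ[t, t^{−1}] → W ⊗ ℂ[t, t^{−1}] be the projection which annihilates the component W ⊗ t^0 and is the identity on W ⊗ t^j for j ≠ 0. Let U ⊆ W ⊗ ℂ[t, t^{−1}] be the ℂ-span of W ⊗ t^N ℂ[t] together with the vectors w ⊗ t^k + Σ_{i=k+1}^{N} x_i(w) ⊗ t^{k−i} for all w ∈ W and k = 0, …, N−1. Then W ⊗ t^N ℂ[t] ⊆ U ⊆ W ⊗ t^{−N} ℂ[t] and pr((id_W ⊗ t)(U)) ⊆ U. -/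

import Mathlib

open Finsupp

/- We model `W ⊗ ℂ[t,t⁻¹]` as the space `ℤ →₀ W` of finitely supported functions
`ℤ → W` (the value at `j` being the coefficient of `t^j`); `w ⊗ t^j` corresponds to
`Finsupp.single j w`, multiplication by `t` corresponds to `Finsupp.mapDomain (· + 1)`,
and the projection `pr` annihilating `W ⊗ t^0` sends `f` to `f - Finsupp.single 0 (f 0)`.
`W ⊗ t^N ℂ[t]` is the set of `f` vanishing in degrees `< N`, and `W ⊗ t^{-N} ℂ[t]`
is the set of `f` vanishing in degrees `< -N`. -/

theorem stmt10 (n N : ℕ) (hN : 1 ≤ N) (W : Type) [AddCommGroup W] [Module ℂ W]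
    [FiniteDimensional ℂ W] (hW : Module.finrank ℂ W = n)
    (x : ℕ → (W →ₗ[ℂ] W))
    (U : Submodule ℂ (ℤ →₀ W))
    (hU : U = Submodule.span ℂ
      ({v : ℤ →₀ W | ∃ (j : ℤ) (w : W), (N : ℤ) ≤ j ∧ v = Finsupp.single j w} ∪
       {v : ℤ →₀ W | ∃ (k : ℕ) (w : W), k < N ∧
         v = Finsupp.single (k : ℤ) w +
           ∑ i ∈ Finset.Icc (k + 1) N, Finsupp.single ((k : ℤ) - (i : ℤ)) (x i w)})) :
    (∀ f : ℤ →₀ W, (∀ j : ℤ, j < (N : ℤ) → f j = 0) → f ∈ U) ∧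
    (∀ f ∈ U, ∀ j : ℤ, j < -(N : ℤ) → f j = 0) ∧
    (∀ u ∈ U, Finsupp.mapDomain (· + 1) u -
        Finsupp.single 0 ((Finsupp.mapDomain (· + 1) u) 0) ∈ U) := by
  have hgen1 : ∀ (j : ℤ) (w : W), (N : ℤ) ≤ j → Finsupp.single j w ∈ U := by
    intro j w hj
    rw [hU]
    exact Submodule.subset_span (Or.inl ⟨j, w, hj, rfl⟩)
  refine ⟨?_, ?_, ?_⟩
  · intro f hf
    rw [← Finsupp.sum_single f]
    apply Submodule.finsuppSum_mem
    intro j hj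
    apply hgen1
    by_contra h
    exact hj (hf j (by omega))
  · -- define submodule of f vanishing below -N
    have hle : U ≤ {
      carrier := {f : ℤ →₀ W | ∀ j : ℤ, j < -(N : ℤ) → f j = 0}
      add_mem' := by intro a b ha hb j hj; simp [ha j hj, hb j hj]
      zero_mem' := by intro j hj; simp
      smul_mem' := by intro c a ha j hj; simp [ha j hj] } := by
      rw [hU]
      apply Submodule.span_le.mpr
      rintro v (⟨j, w, hj, rfl⟩ | ⟨k, w, hk, rfl⟩)
      · intro j' hj'
        apply Finsupp.single_eq_of_ne
        omega
      · intro j' hj'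
        simp only [Finsupp.add_apply, Finsupp.finset_sum_apply]
        rw [Finsupp.single_eq_of_ne (by omega)]
        rw [Finset.sum_eq_zero, add_zero]
        intro i hi
        simp only [Finset.mem_Icc] at hi
        apply Finsupp.single_eq_of_ne
        omega
    exact fun f hf j hj => hle hf j hj
  · set L : (ℤ →₀ W) →ₗ[ℂ] (ℤ →₀ W) :=
      Finsupp.lmapDomain W ℂ (· + 1) -
        (Finsupp.lsingle 0 ∘ₗ Finsupp.lapply 0 ∘ₗ Finsupp.lmapDomain W ℂ (· + 1)) with hL
    have hLapp : ∀ u : ℤ →₀ W, L u = Finsupp.mapDomain (· + 1) u -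
        Finsupp.single 0 ((Finsupp.mapDomain (· + 1) u) 0) := by
      intro u; simp [hL]
    have key : ∀ u ∈ U, L u ∈ U := by
      intro u hu
      have : U ≤ U.comap L := by
        nth_rewrite 1 [hU]
        apply Submodule.span_le.mpr
        rintro v (⟨j, w, hj, rfl⟩ | ⟨k, w, hk, rfl⟩)
        · simp only [SetLike.mem_coe, Submodule.mem_comap, hLapp, Finsupp.mapDomain_single]
          rw [Finsupp.single_eq_of_ne (by omega : (0 : ℤ) ≠ j + 1), Finsupp.single_zero, sub_zero]
          exact hgen1 _ _ (by omega)
        · simp only [SetLike.mem_coe, Submodule.mem_comap, hLapp]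
          have hmap : Finsupp.mapDomain (fun x : ℤ => x + 1)
              (Finsupp.single (k : ℤ) w +
                ∑ i ∈ Finset.Icc (k + 1) N, Finsupp.single ((k : ℤ) - (i : ℤ)) (x i w)) =
              Finsupp.single ((k : ℤ) + 1) w +
                ∑ i ∈ Finset.Icc (k + 1) N, Finsupp.single ((k : ℤ) + 1 - (i : ℤ)) (x i w) := by
            rw [Finsupp.mapDomain_add, Finsupp.mapDomain_single, Finsupp.mapDomain_finset_sum]
            congr 1
            apply Finset.sum_congr rfl
            intro i hi
            rw [Finsupp.mapDomain_single]
            congr 1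
            ring
          rw [hmap]
          have hsplit : ∑ i ∈ Finset.Icc (k + 1) N, Finsupp.single ((k : ℤ) + 1 - (i : ℤ)) (x i w) =
              Finsupp.single (0 : ℤ) (x (k+1) w) +
                ∑ i ∈ Finset.Icc (k + 2) N, Finsupp.single ((k : ℤ) + 1 - (i : ℤ)) (x i w) := by
            rw [← Finset.add_sum_erase _ _ (Finset.mem_Icc.mpr ⟨le_refl _, hk⟩)]
            congr 2
            · push_cast; ring_nf
            · rw [Finset.Icc_erase_left]
              ext a
              simp only [Finset.mem_Ioc, Finset.mem_Icc, Nat.succ_eq_add_one]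
              omega
          rw [hsplit]
          have heval : (Finsupp.single ((k : ℤ) + 1) w +
              (Finsupp.single (0 : ℤ) (x (k+1) w) +
                ∑ i ∈ Finset.Icc (k + 2) N, Finsupp.single ((k : ℤ) + 1 - (i : ℤ)) (x i w))) 0 =
              x (k+1) w := by
            simp only [Finsupp.add_apply, Finsupp.finset_sum_apply]
            rw [Finsupp.single_eq_of_ne (by omega : (0 : ℤ) ≠ (k : ℤ) + 1), Finsupp.single_eq_same,
              Finset.sum_eq_zero, zero_add, add_zero]
            intro i hi
            simp only [Finset.mem_Icc] at hi
            exact Finsupp.single_eq_of_ne (by omega)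
          rw [heval]
          have : (Finsupp.single ((k : ℤ) + 1) w +
              (Finsupp.single (0 : ℤ) (x (k+1) w) +
                ∑ i ∈ Finset.Icc (k + 2) N, Finsupp.single ((k : ℤ) + 1 - (i : ℤ)) (x i w))) -
              Finsupp.single (0 : ℤ) (x (k+1) w) =
              Finsupp.single ((k : ℤ) + 1) w +
                ∑ i ∈ Finset.Icc (k + 2) N, Finsupp.single ((k : ℤ) + 1 - (i : ℤ)) (x i w) := by
            abel
          rw [this]
          by_cases hkN : k + 1 < N
          · rw [hU]
            apply Submodule.subset_span
            right
            refine ⟨k + 1, w, hkN, ?_⟩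
            congr 1
            all_goals first
            | (congr 1; push_cast; ring)
            | (apply Finset.sum_congr rfl
               intro i hi
               congr 1
               push_cast
               ring)
          · have : k + 1 = N := by omega
            subst this
            rw [Finset.Icc_eq_empty (by omega), Finset.sum_empty, add_zero]
            exact hgen1 _ _ (by push_cast; omega)
      exact this hu
    intro u hu
    have := key u hu
    rwa [hLapp] at this
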